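/- Fix coprime positive integers m and n and an integer l ≥ 1. Let S ⊆ (ℤ ∪ {∞})^l consist of the all-zero tuple (0, …, 0) together with all coordinate permutations of the tuples having exactly i entries equal to ∞ and l − i entries equal to i·m·n, for 1 ≤ i ≤ l − 1, and let A_gen be the intersection of all multi-semimodules containing S. Then A_gen = A'_gen; that is, γ ∈ A_gen if and only if γ has at least one finite coordinate and for each i, either γ_i = ∞ or γ_i ∈ c_i(γ)·m·n + m·ℕ + n·ℕ. -/

import Mathlib

/-- `c_i(γ)`: the number of indices `j` with `γ j > γ i`. -/
noncomputable def cIdx {l : ℕ} (γ : Fin l → WithTop ℤ) (i : Fin l) : ℕ :=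
  Set.ncard {j : Fin l | γ i < γ j}

/-- A multi-semimodule for parameters `m`, `n` inside `(ℤ ∪ {∞})^l`, where
`∞ = ⊤ : WithTop ℤ` (so `∞ + a = ∞` and `min(∞, a) = a`). -/
def IsMultiSemimodule (m n l : ℕ) (A : Set (Fin l → WithTop ℤ)) : Prop :=
  -- (1) boundedness below, and containing all sufficiently positive tuples
  (∃ N₁ : ℤ, ∀ γ ∈ A, ∀ i, (N₁ : WithTop ℤ) ≤ γ i) ∧
  (∃ N₂ : ℤ, ∀ γ : Fin l → WithTop ℤ,
      (∀ i, (N₂ : WithTop ℤ) ≤ γ i) → (∃ i, γ i ≠ ⊤) → γ ∈ A) ∧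
  -- (2) elements have a finite coordinate; stability under adding a·m̲ + b·n̲
  (∀ γ ∈ A, (∃ i, γ i ≠ ⊤) ∧
      ∀ a b : ℕ, (fun i => γ i + ((a * m + b * n : ℤ) : WithTop ℤ)) ∈ A) ∧
  -- (3) stability under componentwise minimum
  (∀ γ ∈ A, ∀ γ' ∈ A, (fun i => min (γ i) (γ' i)) ∈ A)

/-- The set `A'_gen` of all `γ` with at least one finite coordinate such that each
coordinate is `∞` or lies in `c_i(γ)·m·n + m·ℕ + n·ℕ`. -/
noncomputable def AgenSet' (m n l : ℕ) : Set (Fin l → WithTop ℤ) :=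
  {γ | (∃ i, γ i ≠ ⊤) ∧ ∀ i, γ i = ⊤ ∨
      ∃ a b : ℕ, γ i = (((cIdx γ i * m * n + a * m + b * n : ℕ) : ℤ) : WithTop ℤ)}

/-- The generating set `S`: the all-zero tuple together with all coordinate
permutations of the tuples with exactly `i` entries equal to `∞` and `l - i`
entries equal to `i·m·n`, for `1 ≤ i ≤ l - 1`. -/
def genSet (m n l : ℕ) : Set (Fin l → WithTop ℤ) :=
  {γ | γ = (fun _ => ((0 : ℤ) : WithTop ℤ)) ∨
    ∃ i : ℕ, 1 ≤ i ∧ i ≤ l - 1 ∧ ∃ T : Finset (Fin l), T.card = i ∧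
      γ = fun j => if j ∈ T then (⊤ : WithTop ℤ) else (((i * m * n : ℕ) : ℤ) : WithTop ℤ)}

/-- `A_gen`: the smallest multi-semimodule containing the generating set `S`,
i.e. the intersection of all multi-semimodules containing `S`. -/
def AgenSet (m n l : ℕ) : Set (Fin l → WithTop ℤ) :=
  ⋂₀ {A | IsMultiSemimodule m n l A ∧ genSet m n l ⊆ A}

/-! ### Auxiliary lemmas -/

lemma rep_lemma {m n : ℕ} (hm : 0 < m) (hn : 0 < n) (cop : Nat.Coprime m n)
    (k : ℕ) (hk : m * n ≤ k) : ∃ a b : ℕ, k = a * m + b * n := by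
  rcases eq_or_lt_of_le (show 1 ≤ m from hm) with h1 | h1
  · exact ⟨k, 0, by subst h1; omega⟩
  rcases eq_or_lt_of_le (show 1 ≤ n from hn) with h2 | h2
  · exact ⟨0, k, by subst h2; omega⟩
  have H := (frobeniusNumber_pair cop h1 h2).2
  by_cases hc : k ∈ AddSubmonoid.closure ({m, n} : Set ℕ)
  · rw [AddSubmonoid.mem_closure_pair] at hc
    obtain ⟨a, b, hab⟩ := hc
    exact ⟨a, b, by simpa [smul_eq_mul, eq_comm] using hab⟩
  · have := H hc
    have : m + n ≤ m * n := Nat.add_le_mul h1 h2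
    omega

lemma cIdx_shift {l : ℕ} (γ : Fin l → WithTop ℤ) (x : ℤ) :
    cIdx (fun i => γ i + (x : WithTop ℤ)) = cIdx γ := by
  funext i
  unfold cIdx
  congr 1
  ext j
  simp only [Set.mem_setOf_eq]
  exact WithTop.add_lt_add_iff_right WithTop.coe_ne_top

lemma cIdx_le {l : ℕ} (γ : Fin l → WithTop ℤ) (i : Fin l) : cIdx γ i ≤ l := by
  have := Set.ncard_le_ncard (Set.subset_univ {j : Fin l | γ i < γ j}) Set.finite_univ
  simpa [Set.ncard_univ, cIdx] using this

lemma cIdx_lt {l : ℕ} (γ : Fin l → WithTop ℤ) (i : Fin l) : cIdx γ i + 1 ≤ l := by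
  have hi : i ∉ {j : Fin l | γ i < γ j} := by simp
  have h1 : (insert i {j : Fin l | γ i < γ j}).ncard = cIdx γ i + 1 :=
    Set.ncard_insert_of_notMem hi (Set.toFinite _)
  have h2 := Set.ncard_le_ncard (Set.subset_univ (insert i {j : Fin l | γ i < γ j}))
    Set.finite_univ
  rw [h1] at h2
  simpa [Set.ncard_univ] using h2

/-- min helper: if `δ_i = γ_i` and `γ` has the defining property at `i`,
then `δ = min γ γ'` has it at `i`. -/
lemma min_case {m n l : ℕ} {γ γ' : Fin l → WithTop ℤ} {i : Fin l}
    (hmin : min (γ i) (γ' i) = γ i)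
    (hγ : ∃ a b : ℕ, γ i = (((cIdx γ i * m * n + a * m + b * n : ℕ) : ℤ) : WithTop ℤ)) :
    ∃ a b : ℕ, min (γ i) (γ' i) =
      (((cIdx (fun j => min (γ j) (γ' j)) i * m * n + a * m + b * n : ℕ) : ℤ) : WithTop ℤ) := by
  obtain ⟨a, b, hab⟩ := hγ
  set δ : Fin l → WithTop ℤ := fun j => min (γ j) (γ' j) with hδ
  have hsub : {j : Fin l | δ i < δ j} ⊆ {j : Fin l | γ i < γ j} := by
    intro j hj
    simp only [Set.mem_setOf_eq] at hj ⊢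
    have h1 : δ j ≤ γ j := min_le_left _ _
    have h2 : δ i = γ i := hmin
    exact lt_of_lt_of_le (h2 ▸ hj) h1
  have hle : cIdx δ i ≤ cIdx γ i := Set.ncard_le_ncard hsub (Set.toFinite _)
  obtain ⟨d, hd⟩ := Nat.exists_eq_add_of_le hle
  refine ⟨d * n + a, b, ?_⟩
  rw [show min (γ i) (γ' i) = γ i from hmin, hab]
  congr 2
  rw [hd]; ring

/-- `AgenSet'` is a multi-semimodule. -/
lemma AgenSet'_isMSM (m n l : ℕ) (hm : 0 < m) (hn : 0 < n)
    (hmn : Nat.Coprime m n) (hl : 1 ≤ l) :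
    IsMultiSemimodule m n l (AgenSet' m n l) := by
  refine ⟨⟨0, ?_⟩, ⟨((l * m * n + m * n : ℕ) : ℤ), ?_⟩, ?_, ?_⟩
  · -- bounded below by 0
    rintro γ ⟨-, hγ⟩ i
    rcases hγ i with h | ⟨a, b, h⟩
    · rw [h]; exact le_top
    · rw [h]
      exact_mod_cast (Int.ofNat_nonneg _ : (0:ℤ) ≤ _)
  · -- sufficiently positive tuples
    intro γ hpos hfin
    refine ⟨hfin, fun i => ?_⟩
    by_cases hi : γ i = ⊤
    · exact Or.inl hi
    right
    obtain ⟨v, hv⟩ := WithTop.ne_top_iff_exists.mp hi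
    have hvN : ((l * m * n + m * n : ℕ) : ℤ) ≤ v := by
      have := hpos i
      rw [← hv] at this
      exact_mod_cast this
    set k : ℕ := v.toNat with hk
    have hvk : (k : ℤ) = v := Int.toNat_of_nonneg (le_trans (by positivity) hvN)
    have hkN : l * m * n + m * n ≤ k := by omega
    have hcl : cIdx γ i * m * n ≤ l * m * n :=
      Nat.mul_le_mul_right _ (Nat.mul_le_mul_right _ (cIdx_le γ i))
    obtain ⟨a, b, hab⟩ := rep_lemma hm hn hmn (k - cIdx γ i * m * n) (by omega)
    refine ⟨a, b, ?_⟩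
    rw [← hv, ← hvk]
    congr 1
    omega
  · -- shift stability
    rintro γ ⟨⟨i0, hi0⟩, hγ⟩ 
    refine ⟨⟨i0, hi0⟩, fun a b => ?_⟩
    have hshift := cIdx_shift γ ((a * m + b * n : ℤ))
    refine ⟨⟨i0, ?_⟩, fun i => ?_⟩
    · exact WithTop.add_ne_top.mpr ⟨hi0, WithTop.coe_ne_top⟩
    rcases hγ i with h | ⟨a0, b0, h⟩
    · left; simp [h]
    right
    refine ⟨a0 + a, b0 + b, ?_⟩
    show γ i + _ = _
    rw [hshift, h, ← WithTop.coe_add]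
    congr 1
    push_cast
    ring
  · -- min stability
    rintro γ ⟨⟨i0, hi0⟩, hγ⟩ γ' ⟨-, hγ'⟩
    refine ⟨⟨i0, ?_⟩, fun i => ?_⟩
    · exact fun hc => hi0 (min_eq_top.mp hc).1
    by_cases ht : min (γ i) (γ' i) = ⊤
    · exact Or.inl ht
    right
    rcases min_cases (γ i) (γ' i) with ⟨heq, -⟩ | ⟨heq, hlt⟩
    · have hγi : γ i ≠ ⊤ := heq ▸ ht
      rcases hγ i with h | h
      · exact absurd h hγi
      exact min_case heq h
    · have hγ'i : γ' i ≠ ⊤ := heq ▸ ht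
      rcases hγ' i with h | h
      · exact absurd h hγ'i
      have hmin' : min (γ' i) (γ i) = γ' i := by rw [min_comm]; exact heq
      have := min_case (γ := γ') (γ' := γ) hmin' h
      simpa [min_comm] using this

lemma genSet_subset (m n l : ℕ) (hl : 1 ≤ l) : genSet m n l ⊆ AgenSet' m n l := by
  rintro γ (rfl | ⟨i, hi1, hi2, T, hT, rfl⟩)
  · -- zero tuple
    refine ⟨⟨⟨0, hl⟩, by simp⟩, fun j => Or.inr ⟨0, 0, ?_⟩⟩
    have : cIdx (fun _ : Fin l => ((0:ℤ) : WithTop ℤ)) j = 0 := by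
      unfold cIdx
      simp
    rw [this]
    simp
  · -- ∞-pattern tuple
    have hTne : ∃ j : Fin l, j ∉ T := by
      by_contra h
      push_neg at h
      have : T = Finset.univ := Finset.eq_univ_iff_forall.mpr h
      rw [this, Finset.card_univ, Fintype.card_fin] at hT
      omega
    obtain ⟨j0, hj0⟩ := hTne
    set γ : Fin l → WithTop ℤ :=
      fun j => if j ∈ T then (⊤ : WithTop ℤ) else (((i * m * n : ℕ) : ℤ) : WithTop ℤ) with hγ
    have hval : ∀ j, j ∉ T → γ j = (((i * m * n : ℕ) : ℤ) : WithTop ℤ) := by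
      intro j hj; simp [hγ, hj]
    have hcIdx : ∀ j, j ∉ T → cIdx γ j = i := by
      intro j hj
      have hset : {k : Fin l | γ j < γ k} = (T : Set (Fin l)) := by
        ext k
        simp only [Set.mem_setOf_eq, Finset.coe_mem, Finset.mem_coe]
        constructor
        · intro hk
          by_contra hkT
          rw [hval j hj, hval k hkT] at hk
          exact lt_irrefl _ hk
        · intro hk
          rw [hval j hj, hγ]
          simp [hk]
          exact WithTop.coe_lt_top _
      unfold cIdx
      rw [hset, Set.ncard_coe_finset, hT]
    refine ⟨⟨j0, by rw [hval j0 hj0]; exact WithTop.coe_ne_top⟩, fun j => ?_⟩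
    by_cases hj : j ∈ T
    · left; simp [hγ, hj]
    · right
      refine ⟨0, 0, ?_⟩
      rw [hval j hj, hcIdx j hj]
      simp

lemma inf'_mem {l : ℕ} {A : Set (Fin l → WithTop ℤ)}
    (h3 : ∀ γ ∈ A, ∀ γ' ∈ A, (fun i => min (γ i) (γ' i)) ∈ A)
    (F : Fin l → Fin l → WithTop ℤ) (s : Finset (Fin l)) (hs : s.Nonempty) :
    (∀ i ∈ s, F i ∈ A) → (fun j => s.inf' hs (fun i => F i j)) ∈ A := by
  induction hs using Finset.Nonempty.cons_induction with
  | singleton a => intro hF; simpa using hF a (by simp)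
  | cons a s h hs ih =>
      intro hF
      have h1 : F a ∈ A := hF a (Finset.mem_cons_self a s)
      have h2 : (fun j => s.inf' hs (fun i => F i j)) ∈ A :=
        ih (fun i hi => hF i (Finset.mem_cons_of_mem hi))
      have h4 := h3 _ h1 _ h2
      have : (fun j => (Finset.cons a s h).inf' (Finset.cons_nonempty h) (fun i => F i j))
          = fun j => min (F a j) (s.inf' hs (fun i => F i j)) := by
        funext j
        rw [Finset.inf'_cons]
      rw [this]
      exact h4

lemma AgenSet'_subset (m n l : ℕ) (A : Set (Fin l → WithTop ℤ))
    (hA : IsMultiSemimodule m n l A) (hS : genSet m n l ⊆ A) :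
    AgenSet' m n l ⊆ A := by
  classical
  obtain ⟨-, -, h2, h3⟩ := hA
  rintro γ ⟨⟨i0, hi0⟩, hco⟩
  have haux : ∀ i : Fin l, ∃ a b : ℕ, γ i ≠ ⊤ →
      γ i = (((cIdx γ i * m * n + a * m + b * n : ℕ) : ℤ) : WithTop ℤ) := by
    intro i
    rcases hco i with h | ⟨a, b, h⟩
    · exact ⟨0, 0, fun hc => absurd h hc⟩
    · exact ⟨a, b, fun _ => h⟩
  choose a b hab using haux
  set I : Finset (Fin l) := Finset.univ.filter (fun i => γ i ≠ ⊤) with hIdef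
  have hI : I.Nonempty := ⟨i0, by simp [hIdef, hi0]⟩
  have hmemI : ∀ i, i ∈ I ↔ γ i ≠ ⊤ := by intro i; simp [hIdef]
  set G : Fin l → Fin l → WithTop ℤ := fun i j =>
    if γ i < γ j then (⊤ : WithTop ℤ)
    else (((cIdx γ i * m * n : ℕ) : ℤ) : WithTop ℤ) with hGdef
  have hG : ∀ i ∈ I, G i ∈ A := by
    intro i hi
    apply hS
    by_cases hc : cIdx γ i = 0
    · left
      have hempty : {j : Fin l | γ i < γ j} = ∅ :=
        (Set.ncard_eq_zero (Set.toFinite _)).mp hc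
      funext j
      have hj : ¬ γ i < γ j := by
        intro hlt
        have : j ∈ {j : Fin l | γ i < γ j} := hlt
        rw [hempty] at this
        exact this
      simp [hGdef, hj, hc]
    · right
      refine ⟨cIdx γ i, Nat.one_le_iff_ne_zero.mpr hc, by have := cIdx_lt γ i; omega,
        (Set.toFinite {j : Fin l | γ i < γ j}).toFinset, ?_, ?_⟩
      · unfold cIdx
        exact (Set.ncard_eq_toFinset_card _ _).symm
      · funext j
        simp only [hGdef, Set.Finite.mem_toFinset, Set.mem_setOf_eq]
  set F : Fin l → Fin l → WithTop ℤ := fun i j =>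
    G i j + (((a i * m + b i * n : ℤ)) : WithTop ℤ) with hFdef
  have hF : ∀ i ∈ I, F i ∈ A := fun i hi => (h2 (G i) (hG i hi)).2 (a i) (b i)
  have hFval : ∀ i, γ i ≠ ⊤ → ∀ j, ¬ γ i < γ j → F i j = γ i := by
    intro i hi j hj
    have : F i j = (((cIdx γ i * m * n + a i * m + b i * n : ℕ) : ℤ) : WithTop ℤ) := by
      simp only [hFdef, hGdef, if_neg hj, ← WithTop.coe_add]
      congr 1
      push_cast
      ring
    rw [this, ← hab i hi]
  have key : γ = fun j => I.inf' hI (fun i => F i j) := by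
    funext j
    by_cases hj : γ j = ⊤
    · refine le_antisymm (Finset.le_inf' hI _ fun i hi => ?_) (hj ▸ le_top)
      have hlt : γ i < γ j := by
        rw [hj]
        exact lt_top_iff_ne_top.mpr ((hmemI i).mp hi)
      have : F i j = ⊤ := by simp [hFdef, hGdef, if_pos hlt, top_add]
      rw [this]
      exact le_top
    · have hjI : j ∈ I := (hmemI j).mpr hj
      refine le_antisymm (Finset.le_inf' hI _ fun i hi => ?_) ?_
      · by_cases hlt : γ i < γ j
        · have : F i j = ⊤ := by simp [hFdef, hGdef, if_pos hlt, top_add]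
          rw [this]; exact le_top
        · rw [hFval i ((hmemI i).mp hi) j hlt]
          exact not_lt.mp hlt
      · have := Finset.inf'_le (fun i => F i j) hjI
        rwa [hFval j hj j (lt_irrefl _)] at this
  rw [key]
  exact inf'_mem h3 F I hI hF

theorem AgenSet_eq_AgenSet' (m n l : ℕ) (hm : 0 < m) (hn : 0 < n)
    (hmn : Nat.Coprime m n) (hl : 1 ≤ l) :
    AgenSet m n l = AgenSet' m n l := by
  apply Set.Subset.antisymm
  · intro γ hγ
    exact hγ _ ⟨AgenSet'_isMSM m n l hm hn hmn hl, genSet_subset m n l hl⟩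
  · intro γ hγ A hA
    exact AgenSet'_subset m n l A hA.1 hA.2 hγ
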